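/- Let 𝓕 be the exponential distance matrix of K_{s,t}, with q a nonzero indeterminate satisfying q ≠ ±1 and q²(s−1)(t−1) ≠ 1. Then 𝓕 is invertible and 𝓕⁻¹ = (q / ((1−q²)(1 − q²(s−1)(t−1)))) · [[q(t−1)J_s, −J_{s×t}],[−J_{t×s}, q(s−1)J_t]] + (1/(1−q²)) I_{s+t}. -/

import Mathlib

/-- The exponential distance matrix of a connected graph `G`:
the `(u,v)` entry is `q ^ d(u,v)`. -/
noncomputable def expDistMatrix {V : Type*} (G : SimpleGraph V) (q : ℝ) : Matrix V V ℝ :=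
  Matrix.of fun u v => q ^ (G.dist u v)

open SimpleGraph

section aux
variable (s t : ℕ)

lemma cbg_adj_lr (x : Fin s) (y : Fin t) :
    (completeBipartiteGraph (Fin s) (Fin t)).Adj (Sum.inl x) (Sum.inr y) := by simp

lemma cbg_dist_lr (x : Fin s) (y : Fin t) :
    (completeBipartiteGraph (Fin s) (Fin t)).dist (Sum.inl x) (Sum.inr y) = 1 := by
  rw [SimpleGraph.dist_eq_one_iff_adj]; exact cbg_adj_lr s t x y

lemma cbg_dist_rl (x : Fin s) (y : Fin t) :
    (completeBipartiteGraph (Fin s) (Fin t)).dist (Sum.inr y) (Sum.inl x) = 1 := by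
  rw [SimpleGraph.dist_comm]; exact cbg_dist_lr s t x y

lemma cbg_dist_ll (ht : 0 < t) (a b : Fin s) (hab : a ≠ b) :
    (completeBipartiteGraph (Fin s) (Fin t)).dist (Sum.inl a) (Sum.inl b) = 2 := by
  obtain ⟨c⟩ : Nonempty (Fin t) := ⟨⟨0, ht⟩⟩
  have had : ∀ (x : Fin s) (y : Fin t),
      (completeBipartiteGraph (Fin s) (Fin t)).Adj (Sum.inl x) (Sum.inr y) := by simp
  have had' : ∀ (x : Fin s) (y : Fin t),
      (completeBipartiteGraph (Fin s) (Fin t)).Adj (Sum.inr y) (Sum.inl x) := by simp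
  have h2 := SimpleGraph.dist_le (Walk.cons (had a c) (Walk.cons (had' b c) Walk.nil))
  simp only [Walk.length_cons, Walk.length_nil] at h2
  have h0 : (completeBipartiteGraph (Fin s) (Fin t)).dist (Sum.inl a) (Sum.inl b) ≠ 0 := by
    rw [Ne, SimpleGraph.dist_eq_zero_iff_eq_or_not_reachable]
    push_neg
    exact ⟨by simp [hab], ⟨Walk.cons (had a c) (Walk.cons (had' b c) Walk.nil)⟩⟩
  have h1 : (completeBipartiteGraph (Fin s) (Fin t)).dist (Sum.inl a) (Sum.inl b) ≠ 1 := by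
    rw [Ne, SimpleGraph.dist_eq_one_iff_adj]; simp
  omega

lemma cbg_dist_rr (hs : 0 < s) (a b : Fin t) (hab : a ≠ b) :
    (completeBipartiteGraph (Fin s) (Fin t)).dist (Sum.inr a) (Sum.inr b) = 2 := by
  obtain ⟨c⟩ : Nonempty (Fin s) := ⟨⟨0, hs⟩⟩
  have had : ∀ (x : Fin t) (y : Fin s),
      (completeBipartiteGraph (Fin s) (Fin t)).Adj (Sum.inr x) (Sum.inl y) := by simp
  have had' : ∀ (x : Fin t) (y : Fin s),
      (completeBipartiteGraph (Fin s) (Fin t)).Adj (Sum.inl y) (Sum.inr x) := by simp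
  have h2 := SimpleGraph.dist_le (Walk.cons (had a c) (Walk.cons (had' b c) Walk.nil))
  simp only [Walk.length_cons, Walk.length_nil] at h2
  have h0 : (completeBipartiteGraph (Fin s) (Fin t)).dist (Sum.inr a) (Sum.inr b) ≠ 0 := by
    rw [Ne, SimpleGraph.dist_eq_zero_iff_eq_or_not_reachable]
    push_neg
    exact ⟨by simp [hab], ⟨Walk.cons (had a c) (Walk.cons (had' b c) Walk.nil)⟩⟩
  have h1 : (completeBipartiteGraph (Fin s) (Fin t)).dist (Sum.inr a) (Sum.inr b) ≠ 1 := by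
    rw [Ne, SimpleGraph.dist_eq_one_iff_adj]; simp
  omega

lemma sum_ite_const {n : ℕ} (i : Fin n) (a b : ℝ) :
    ∑ k : Fin n, (if i = k then a else b) = a + ((n : ℝ) - 1) * b := by
  have h : ∀ k : Fin n, (if i = k then a else b) = b + (if i = k then a - b else 0) := by
    intro k; split <;> ring
  simp only [h, Finset.sum_add_distrib, Finset.sum_const, Finset.card_univ, Fintype.card_fin,
    Finset.sum_ite_eq, Finset.mem_univ, if_true]
  
  have : (1 : ℝ) ≤ n := by exact_mod_cast i.pos
  ring

lemma sum_ite_ite {n : ℕ} (i j : Fin n) (a b c : ℝ) :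
    ∑ k : Fin n, (if i = k then a else b) * (if k = j then c else 0)
      = (if i = j then a else b) * c := by
  simp only [mul_ite, mul_zero]
  rw [Finset.sum_ite_eq' Finset.univ j fun k => (if i = k then a else b) * c]
  simp

end aux

section entries
variable (s t : ℕ) (q : ℝ)

lemma M_ll (ht : 0 < t) (i a : Fin s) :
    expDistMatrix (completeBipartiteGraph (Fin s) (Fin t)) q (Sum.inl i) (Sum.inl a)
      = if i = a then 1 else q ^ 2 := by
  rw [expDistMatrix]
  simp only [Matrix.of_apply]
  split
  · rename_i h; subst h; simp [SimpleGraph.dist_self]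
  · rename_i h; rw [cbg_dist_ll s t ht i a h]

lemma M_rr (hs : 0 < s) (i a : Fin t) :
    expDistMatrix (completeBipartiteGraph (Fin s) (Fin t)) q (Sum.inr i) (Sum.inr a)
      = if i = a then 1 else q ^ 2 := by
  rw [expDistMatrix]
  simp only [Matrix.of_apply]
  split
  · rename_i h; subst h; simp [SimpleGraph.dist_self]
  · rename_i h; rw [cbg_dist_rr s t hs i a h]

lemma M_lr (i : Fin s) (a : Fin t) :
    expDistMatrix (completeBipartiteGraph (Fin s) (Fin t)) q (Sum.inl i) (Sum.inr a) = q := by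
  rw [expDistMatrix]; simp only [Matrix.of_apply, cbg_dist_lr, pow_one]

lemma M_rl (i : Fin t) (a : Fin s) :
    expDistMatrix (completeBipartiteGraph (Fin s) (Fin t)) q (Sum.inr i) (Sum.inl a) = q := by
  rw [expDistMatrix]; simp only [Matrix.of_apply, cbg_dist_rl, pow_one]

end entries


set_option maxHeartbeats 1600000 in
/-- The inverse of the exponential distance matrix of `K_{s,t}`. -/
theorem inv_expDistMatrix_completeBipartite (s t : ℕ) (hs : 0 < s) (ht : 0 < t)
    (q : ℝ) (hq0 : q ≠ 0) (hq1 : q ≠ 1) (hq1' : q ≠ -1)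
    (hq2 : q ^ 2 * ((s : ℝ) - 1) * ((t : ℝ) - 1) ≠ 1) :
    IsUnit (expDistMatrix (completeBipartiteGraph (Fin s) (Fin t)) q)
    ∧ (expDistMatrix (completeBipartiteGraph (Fin s) (Fin t)) q)⁻¹
      = (q / ((1 - q ^ 2) * (1 - q ^ 2 * ((s : ℝ) - 1) * ((t : ℝ) - 1)))) •
          Matrix.fromBlocks
            ((q * ((t : ℝ) - 1)) • (Matrix.of fun _ _ => (1 : ℝ)))
            (-(Matrix.of fun _ _ => (1 : ℝ)))
            (-(Matrix.of fun _ _ => (1 : ℝ)))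
            ((q * ((s : ℝ) - 1)) • (Matrix.of fun _ _ => (1 : ℝ)))
        + (1 / (1 - q ^ 2)) • (1 : Matrix (Fin s ⊕ Fin t) (Fin s ⊕ Fin t) ℝ) := by
  set M := expDistMatrix (completeBipartiteGraph (Fin s) (Fin t)) q with hM
  set N := (q / ((1 - q ^ 2) * (1 - q ^ 2 * ((s : ℝ) - 1) * ((t : ℝ) - 1)))) •
          Matrix.fromBlocks
            ((q * ((t : ℝ) - 1)) • (Matrix.of fun _ _ => (1 : ℝ)))
            (-(Matrix.of fun _ _ => (1 : ℝ)))
            (-(Matrix.of fun _ _ => (1 : ℝ)))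
            ((q * ((s : ℝ) - 1)) • (Matrix.of fun _ _ => (1 : ℝ)))
        + (1 / (1 - q ^ 2)) • (1 : Matrix (Fin s ⊕ Fin t) (Fin s ⊕ Fin t) ℝ) with hN
  have hq2' : 1 - q ^ 2 ≠ 0 := by
    intro h
    rcases mul_eq_zero.mp (show (q - 1) * (q + 1) = 0 by nlinarith) with h1 | h1
    · exact hq1 (by linarith)
    · exact hq1' (by linarith)
  have hK : 1 - q ^ 2 * ((s : ℝ) - 1) * ((t : ℝ) - 1) ≠ 0 := by
    intro h; apply hq2; linarith
  have key : M * N = 1 := by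
    ext x y
    rcases x with i | i <;> rcases y with j | j <;>
      rw [Matrix.mul_apply, Fintype.sum_sum_type] <;>
      simp only [hN, Matrix.add_apply, Matrix.smul_apply, Matrix.fromBlocks_apply₁₁,
        Matrix.fromBlocks_apply₁₂, Matrix.fromBlocks_apply₂₁, Matrix.fromBlocks_apply₂₂,
        Matrix.neg_apply, Matrix.of_apply, Matrix.one_apply, smul_eq_mul, hM, reduceCtorEq,
        if_false, add_zero, zero_add,
        M_ll s t q ht, M_rr s t q hs, M_lr, M_rl, Sum.inl.injEq, Sum.inr.injEq,
        mul_one, mul_zero, mul_neg, mul_ite]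
    all_goals
      simp only [mul_add, Finset.sum_add_distrib, ← Finset.sum_mul, sum_ite_const, sum_ite_ite,
        Finset.sum_const, Finset.card_univ, Fintype.card_fin, nsmul_eq_mul, mul_one, mul_neg,
        mul_zero, Finset.sum_neg_distrib, ← Finset.mul_sum, Finset.sum_ite_eq', Finset.mem_univ, if_true]
      try split_ifs with h
      all_goals field_simp [show (1 : ℝ) - (↑s - 1) * q ^ 2 * (↑t - 1) ≠ 0 from fun h => hK (by linarith)]
      all_goals ring
  exact ⟨⟨⟨M, N, key, mul_eq_one_comm.mp key⟩, rfl⟩, Matrix.inv_eq_right_inv key⟩
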